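/- Rotation preserves bigram multisets: for a character z and strings x₁, x₂, the strings z x₁ z x₂ z and z x₂ z x₁ z have the same multiset of bigrams (with delimiters). -/
import Mathlib

def bigrams {β : Type*} (l : List β) : Multiset (β × β) :=
  (l.zip l.tail : List (β × β))

def delim {α : Type*} (w : List α) : List (Option α) :=
  none :: (w.map some ++ [none])

def Phi {α : Type*} (w : List α) : Multiset (Option α × Option α) :=
  bigrams (delim w)

def UD {α : Type*} (w : List α) : Prop :=
  ∀ w' : List α, Phi w' = Phi w → w' = w

lemma bigrams_cons_cons {β : Type*} (a b : β) (l : List β) :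
    bigrams (a :: b :: l) = (a, b) ::ₘ bigrams (b :: l) := by
  simp [bigrams]

lemma bigrams_split {β : Type*} (c : β) : ∀ (u v : List β),
    bigrams (u ++ c :: v) = bigrams (u ++ [c]) + bigrams (c :: v) := by
  intro u
  induction u with
  | nil => intro v; simp [bigrams]
  | cons a u ih =>
    intro v
    cases u with
    | nil => simp [bigrams_cons_cons, bigrams]
    | cons b u =>
      simp only [List.cons_append, bigrams_cons_cons]
      rw [show b :: (u ++ c :: v) = (b :: u) ++ c :: v from rfl,
          show b :: (u ++ [c]) = (b :: u) ++ [c] from rfl, ih, Multiset.cons_add]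

lemma key {α : Type*} (z : α) (A B : List α) :
    Phi ([z] ++ A ++ [z] ++ B ++ [z]) =
      bigrams ([none, some z]) + bigrams (some z :: (A.map some ++ [some z]))
      + bigrams (some z :: (B.map some ++ [some z])) + bigrams ([some z, none]) := by
  have h1 : delim ([z] ++ A ++ [z] ++ B ++ [z]) =
      (([none, some z] ++ A.map some) ++ some z ::
        (some z :: ((B.map some ++ [some z]) ++ [none])).tail : List (Option α)) := by
    simp [delim]
  rw [Phi, h1]
  simp only [List.tail_cons]
  rw [bigrams_split]
  have h2 : (([none, some z] ++ A.map some) ++ [some z] : List (Option α)) =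
      [none] ++ some z :: (A.map some ++ [some z]) := by simp
  rw [h2, bigrams_split]
  rw [show ([none] ++ [some z] : List (Option α)) = [none, some z] from rfl]
  have h3 : (some z :: ((B.map some ++ [some z]) ++ [none]) : List (Option α)) =
      (some z :: B.map some) ++ some z :: [none] := by simp
  rw [h3, bigrams_split]
  rw [show ((some z :: B.map some) ++ [some z] : List (Option α)) =
        some z :: (B.map some ++ [some z]) from by simp,
      show (some z :: [none] : List (Option α)) = [some z, none] from rfl]
  abel

theorem rotation_preserves_bigrams {α : Type*} (z : α) (x₁ x₂ : List α) :
    Phi ([z] ++ x₁ ++ [z] ++ x₂ ++ [z]) = Phi ([z] ++ x₂ ++ [z] ++ x₁ ++ [z]) := by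
  rw [key, key]
  abel
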